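/- Let J ⊆ 𝔽₂[x_1,...,x_n] be a pseudo-monomial ideal and let ∏_{i ∈ σ} z_i be a pseudo-monomial with z_i ∈ {x_i, 1 - x_i} for each i ∈ σ. Then ⟨J, ∏_{i ∈ σ} z_i⟩ = ⋂_{i ∈ σ} ⟨J, z_i⟩. -/

import Mathlib

/-- A pseudo-monomial in `𝔽₂[x₁,…,xₙ]`. -/
def IsPseudoMonomial {n : ℕ} (f : MvPolynomial (Fin n) (ZMod 2)) : Prop :=
  ∃ (σ : Finset (Fin n)) (z : Fin n → MvPolynomial (Fin n) (ZMod 2)),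
    (∀ i ∈ σ, z i = MvPolynomial.X i ∨ z i = 1 - MvPolynomial.X i) ∧ f = ∏ i ∈ σ, z i

/-- A pseudo-monomial ideal: an ideal generated by finitely many pseudo-monomials. -/
def IsPseudoMonomialIdeal {n : ℕ} (J : Ideal (MvPolynomial (Fin n) (ZMod 2))) : Prop :=
  ∃ G : Finset (MvPolynomial (Fin n) (ZMod 2)),
    (∀ g ∈ G, IsPseudoMonomial g) ∧ J = Ideal.span (G : Set (MvPolynomial (Fin n) (ZMod 2)))

namespace PMaux

open MvPolynomial Ideal

variable {n : ℕ}

abbrev R (n : ℕ) := MvPolynomial (Fin n) (ZMod 2)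

lemma two_eq_zero (n : ℕ) : (2 : R n) = 0 := by
  exact_mod_cast CharP.cast_eq_zero (R n) 2

/-- substitution `X j ↦ C c`, fixing all other variables -/
noncomputable def sb (j : Fin n) (c : ZMod 2) : R n →ₐ[ZMod 2] R n :=
  MvPolynomial.aeval (fun i => if i = j then MvPolynomial.C c else MvPolynomial.X i)

lemma sb_X_self (j : Fin n) (c : ZMod 2) : sb j c (X j) = C c := by
  simp [sb]

lemma sb_X_ne (j : Fin n) (c : ZMod 2) {i : Fin n} (h : i ≠ j) : sb j c (X i) = X i := by
  simp [sb, h]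

lemma sb_C (j : Fin n) (c : ZMod 2) (a : ZMod 2) : sb j c (C a) = C a := by
  simp [sb, algebraMap_eq]

lemma sb_z (j : Fin n) (c : ZMod 2) : sb j c (X j + C c) = 0 := by
  rw [map_add, sb_X_self, sb_C, ← map_add]
  have : c + c = 0 := by
    have : ∀ a : ZMod 2, a + a = 0 := by decide
    exact this c
  rw [this, map_zero]

lemma sb_fix (j : Fin n) (c : ZMod 2) {i : Fin n} (h : i ≠ j)
    {y : R n} (hy : y = X i ∨ y = 1 - X i) : sb j c y = y := by
  rcases hy with rfl | rfl
  · exact sb_X_ne j c h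
  · rw [map_sub, map_one, sb_X_ne j c h]

/-- `p - sb j c p` is a multiple of `X j + C c`. -/
lemma sub_sb_mem (j : Fin n) (c : ZMod 2) (p : R n) :
    p - sb j c p ∈ Ideal.span {X j + C c} := by
  induction p using MvPolynomial.induction_on with
  | C a => rw [sb_C, sub_self]; exact zero_mem _
  | add p q hp hq =>
      rw [map_add]
      have : p + q - (sb j c p + sb j c q) = (p - sb j c p) + (q - sb j c q) := by ring
      rw [this]; exact add_mem hp hq
  | mul_X p i hp =>
      rw [_root_.map_mul]
      have : p * X i - sb j c p * sb j c (X i) =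
          (p - sb j c p) * X i + sb j c p * (X i - sb j c (X i)) := by ring
      rw [this]
      refine add_mem (Ideal.mul_mem_right _ _ hp) (Ideal.mul_mem_left _ _ ?_)
      by_cases hij : i = j
      · rw [hij, sb_X_self]
        have h2 := two_eq_zero n
        have : X j - C c = X j + C c := by linear_combination (-(C c : R n)) * h2
        rw [this]
        exact Ideal.subset_span rfl
      · rw [sb_X_ne j c hij, sub_self]; exact zero_mem _

/-- Classification of the image of a pseudo-monomial under `sb j c`. -/
lemma classify (j : Fin n) (c : ZMod 2) {g : R n} (hg : IsPseudoMonomial g) :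
    sb j c g = 0 ∨ sb j c g = g ∨
      ∃ m : R n, sb j c g = m ∧ g = (1 + (X j + C c)) * m := by
  classical
  obtain ⟨τ, y, hy, rfl⟩ := hg
  have h2 := two_eq_zero n
  by_cases hjτ : j ∈ τ
  · set m : R n := ∏ i ∈ τ.erase j, y i with hm
    have hφm : sb j c m = m := by
      rw [hm, map_prod]
      refine Finset.prod_congr rfl (fun i hi => ?_)
      exact sb_fix j c (Finset.ne_of_mem_erase hi) (hy i (Finset.mem_of_mem_erase hi))
    have hgm : ∏ i ∈ τ, y i = y j * m := (Finset.mul_prod_erase τ y hjτ).symm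
    have hc : c = 0 ∨ c = 1 := by
      have : ∀ a : ZMod 2, a = 0 ∨ a = 1 := by decide
      exact this c
    rcases hy j hjτ with h1 | h1 <;> rcases hc with rfl | rfl
    · -- y j = X j, c = 0
      left
      rw [hgm, _root_.map_mul, h1, sb_X_self, hφm]
      simp
    · -- y j = X j, c = 1
      right; right
      refine ⟨m, ?_, ?_⟩
      · rw [hgm, _root_.map_mul, h1, sb_X_self, hφm]
        simp
      · rw [hgm, h1, C_1]
        linear_combination (-(m) : R n) * h2
    · -- y j = 1 - X j, c = 0
      right; right
      refine ⟨m, ?_, ?_⟩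
      · rw [hgm, _root_.map_mul, h1, map_sub, map_one, sb_X_self, hφm]
        simp
      · rw [hgm, h1, C_0]
        linear_combination (-(X j * m) : R n) * h2
    · -- y j = 1 - X j, c = 1
      left
      rw [hgm, _root_.map_mul, h1, map_sub, map_one, sb_X_self, hφm, C_1]
      simp
  · right; left
    rw [map_prod]
    exact Finset.prod_congr rfl (fun i hi => sb_fix j c (fun h => hjτ (h ▸ hi)) (hy i hi))

/-- Core lemma: if `z * q ∈ ⟨G, b⟩` then `z * q ∈ ⟨G, z*b⟩`, where `z = X j + C c`,
`b` is fixed by the substitution, and `G` consists of pseudo-monomials. -/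
lemma core (j : Fin n) (c : ZMod 2) (G : Finset (R n))
    (hG : ∀ g ∈ G, IsPseudoMonomial g) (b q : R n) (hb : sb j c b = b)
    (hq : (X j + C c) * q ∈ Ideal.span (G : Set (R n)) ⊔ Ideal.span {b}) :
    (X j + C c) * q ∈ Ideal.span (G : Set (R n)) ⊔ Ideal.span {(X j + C c) * b} := by
  classical
  set z : R n := X j + C c with hzdef
  set φ := sb j c with hφdef
  have hz0 : φ z = 0 := sb_z j c
  have h2 := two_eq_zero n
  -- decompose the membership
  have hq' : z * q ∈ Ideal.span (insert b (G : Set (R n))) := by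
    rw [Ideal.span_insert]
    rw [sup_comm] at hq
    exact hq
  obtain ⟨h, w, hw, heq⟩ := Ideal.mem_span_insert.mp hq'
  obtain ⟨f, -, hf⟩ := Submodule.mem_span_finset.mp hw
  have hf' : ∑ g ∈ G, f g * g = w := by simpa [smul_eq_mul] using hf
  -- apply φ to heq
  have hE : (∑ g ∈ G, φ (f g) * φ g) + φ h * b = 0 := by
    have := congrArg φ heq
    rw [_root_.map_mul, hz0, zero_mul, map_add, _root_.map_mul, hb, ← hf', map_sum] at this
    simp only [_root_.map_mul] at this
    linear_combination -this
  set S : R n := ∑ g ∈ G, φ (f g) * φ g with hS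
  refine Submodule.mem_sup.mpr
    ⟨∑ g ∈ G, (f g * g + (1 + z) * (φ (f g) * φ g)), ?_, (h + (1 + z) * φ h) * b, ?_, ?_⟩
  · -- first part lies in span G
    refine Ideal.sum_mem _ (fun g hg => ?_)
    rcases classify j c (hG g hg) with h0 | hfix | ⟨m, hφg, hgm⟩
    · rw [h0, mul_zero, mul_zero, add_zero]
      exact Ideal.mul_mem_left _ _ (Ideal.subset_span hg)
    · have : f g * g + (1 + z) * (φ (f g) * φ g) = (f g + (1 + z) * φ (f g)) * g := by
        rw [hfix]; ring
      rw [this]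
      exact Ideal.mul_mem_left _ _ (Ideal.subset_span hg)
    · have : f g * g + (1 + z) * (φ (f g) * φ g) = (f g + φ (f g)) * g := by
        rw [hφg, hgm]; ring
      rw [this]
      exact Ideal.mul_mem_left _ _ (Ideal.subset_span hg)
  · -- second part lies in span {z*b}
    rw [Ideal.mem_span_singleton]
    obtain ⟨t, ht⟩ := Ideal.mem_span_singleton.mp (sub_sb_mem j c h)
    rw [← hφdef, ← hzdef] at ht
    exact ⟨t + φ h, by linear_combination (b : R n) * ht + (φ h * b) * h2⟩
  · -- the sum is z * q
    have hA : ∑ g ∈ G, (f g * g + (1 + z) * (φ (f g) * φ g)) = w + (1 + z) * S := by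
      rw [Finset.sum_add_distrib, hf', hS, Finset.mul_sum]
    rw [hA]
    linear_combination -heq + (1 + z) * hE

/-- Two-factor step. -/
lemma stepF (j : Fin n) (c : ZMod 2) (G : Finset (R n))
    (hG : ∀ g ∈ G, IsPseudoMonomial g) (b : R n) (hb : sb j c b = b) :
    Ideal.span (G : Set (R n)) ⊔ Ideal.span {(X j + C c) * b} =
      (Ideal.span (G : Set (R n)) ⊔ Ideal.span {X j + C c}) ⊓
        (Ideal.span (G : Set (R n)) ⊔ Ideal.span {b}) := by
  apply le_antisymm
  · refine sup_le (le_inf le_sup_left le_sup_left) (le_inf ?_ ?_)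
    · exact le_trans (Ideal.span_singleton_le_span_singleton.mpr ⟨b, rfl⟩) le_sup_right
    · exact le_trans (Ideal.span_singleton_le_span_singleton.mpr ⟨X j + C c, mul_comm _ _⟩)
        le_sup_right
  · intro p hp
    obtain ⟨hp1, hp2⟩ := Submodule.mem_inf.mp hp
    obtain ⟨j', hj', r, hr, hsum⟩ := Submodule.mem_sup.mp hp1
    obtain ⟨q, rfl⟩ := Ideal.mem_span_singleton.mp hr
    have hzq : (X j + C c) * q ∈ Ideal.span (G : Set (R n)) ⊔ Ideal.span {b} := by
      have hpj : (X j + C c) * q = p - j' := by linear_combination hsum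
      rw [hpj]
      exact sub_mem hp2 (Ideal.mem_sup_left hj')
    have := core j c G hG b q hb hzq
    have hp' : p = j' + (X j + C c) * q := by linear_combination -hsum
    rw [hp']
    exact add_mem (Ideal.mem_sup_left hj') this

end PMaux

theorem stmt_13 (n : ℕ) (J : Ideal (MvPolynomial (Fin n) (ZMod 2)))
    (hJ : IsPseudoMonomialIdeal J) (σ : Finset (Fin n))
    (z : Fin n → MvPolynomial (Fin n) (ZMod 2))
    (hz : ∀ i ∈ σ, z i = MvPolynomial.X i ∨ z i = 1 - MvPolynomial.X i) :
    J ⊔ Ideal.span {∏ i ∈ σ, z i} = ⨅ i ∈ σ, (J ⊔ Ideal.span {z i}) := by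
  classical
  open MvPolynomial PMaux in
  obtain ⟨G, hG, rfl⟩ := hJ
  revert hz
  induction σ using Finset.induction_on with
  | empty => intro hz; simp [Ideal.span_singleton_one]
  | @insert j s hj ih =>
      intro hz
      have ihs := ih (fun i hi => hz i (Finset.mem_insert_of_mem hi))
      rw [Finset.prod_insert hj, Finset.iInf_insert, ← ihs]
      have h2 := PMaux.two_eq_zero n
      obtain ⟨c, hc⟩ : ∃ c : ZMod 2, z j = X j + C c := by
        rcases hz j (Finset.mem_insert_self j s) with h | h
        · exact ⟨0, by simp [h]⟩
        · refine ⟨1, ?_⟩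
          rw [h, map_one]
          linear_combination (-(X j) : MvPolynomial (Fin n) (ZMod 2)) * h2
      have hbfix : PMaux.sb j c (∏ i ∈ s, z i) = ∏ i ∈ s, z i := by
        rw [map_prod]
        refine Finset.prod_congr rfl (fun i hi => ?_)
        exact PMaux.sb_fix j c (fun hij => hj (hij ▸ hi)) (hz i (Finset.mem_insert_of_mem hi))
      rw [hc]
      exact PMaux.stepF j c G hG (∏ i ∈ s, z i) hbfix
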